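/- If A and B are normal subgroups of a group G and i ≥ 1, then [A, γ_i(B)] is contained in the left-normed commutator subgroup [A, B, B, ..., B] (with i copies of B). -/

import Mathlib

open Subgroup

/-- Three subgroups lemma, `≤` version: proved by passing to the quotient by `H`. -/
lemma three_subgroups_le {G : Type*} [Group G] (H H₁ H₂ H₃ : Subgroup G) [H.Normal]
    (h1 : ⁅⁅H₂, H₃⁆, H₁⁆ ≤ H) (h2 : ⁅⁅H₃, H₁⁆, H₂⁆ ≤ H) : ⁅⁅H₁, H₂⁆, H₃⁆ ≤ H := by
  set f := QuotientGroup.mk' H with hf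
  have key : ∀ K : Subgroup G, K ≤ H ↔ Subgroup.map f K = ⊥ := by
    intro K
    rw [eq_bot_iff, Subgroup.map_le_iff_le_comap]
    have : Subgroup.comap f ⊥ = H := QuotientGroup.ker_mk' H
    rw [this]
  rw [key] at h1 h2 ⊢
  rw [Subgroup.map_commutator, Subgroup.map_commutator] at h1 h2 ⊢
  exact Subgroup.commutator_commutator_eq_bot_of_rotate h1 h2

theorem commutator_lowerCentral_le_leftNormed
    {G : Type*} [Group G] (A B : Subgroup G) [A.Normal] [B.Normal]
    (i : ℕ) (hi : 1 ≤ i)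
    (N : ℕ → Subgroup G) (hN0 : N 0 = A)
    (hNsucc : ∀ k, N (k + 1) = ⁅N k, B⁆) :
    ⁅A, Subgroup.map B.subtype ((⊤ : Subgroup B).lowerCentralSeries (i - 1))⁆ ≤ N i := by
  -- each N k is normal
  have hnorm : ∀ k, (N k).Normal := by
    intro k
    induction k with
    | zero => rw [hN0]; infer_instance
    | succ k ih => rw [hNsucc k]; exact @Subgroup.commutator_normal _ _ _ _ ih ‹B.Normal›
  -- the image of the lower central series
  have hmap0 : Subgroup.map B.subtype ((⊤ : Subgroup B).lowerCentralSeries 0) = B := by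
    rw [Subgroup.lowerCentralSeries_zero, ← MonoidHom.range_eq_map]; exact B.range_subtype
  have hmapsucc : ∀ j, Subgroup.map B.subtype ((⊤ : Subgroup B).lowerCentralSeries (j + 1)) =
      ⁅Subgroup.map B.subtype ((⊤ : Subgroup B).lowerCentralSeries j), B⁆ := by
    intro j
    have : (⊤ : Subgroup B).lowerCentralSeries (j + 1) = ⁅(⊤ : Subgroup B).lowerCentralSeries j, (⊤ : Subgroup B)⁆ := rfl
    have htop : Subgroup.map B.subtype ⊤ = B := by
      rw [← MonoidHom.range_eq_map]; exact B.range_subtype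
    rw [this, Subgroup.map_commutator, htop]
  -- main induction
  have key : ∀ j k, ⁅N k, Subgroup.map B.subtype ((⊤ : Subgroup B).lowerCentralSeries j)⁆ ≤ N (k + j + 1) := by
    intro j
    induction j with
    | zero =>
      intro k
      rw [hmap0, ← hNsucc k]
    | succ j ih =>
      intro k
      have hH : (N (k + (j + 1) + 1)).Normal := hnorm _
      rw [hmapsucc j]
      rw [Subgroup.commutator_comm]
      refine three_subgroups_le _ _ _ _ ?_ ?_
      · -- ⁅⁅B, N k⁆, map (lcs j)⁆ ≤ N (k + j + 2)
        rw [Subgroup.commutator_comm B (N k), ← hNsucc k]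
        have := ih (k + 1)
        calc ⁅N (k + 1), Subgroup.map B.subtype ((⊤ : Subgroup B).lowerCentralSeries j)⁆
            ≤ N (k + 1 + j + 1) := this
          _ = N (k + (j + 1) + 1) := by ring_nf
      · -- ⁅⁅N k, map (lcs j)⁆, B⁆ ≤ N (k + j + 2)
        calc ⁅⁅N k, Subgroup.map B.subtype ((⊤ : Subgroup B).lowerCentralSeries j)⁆, B⁆
            ≤ ⁅N (k + j + 1), B⁆ := Subgroup.commutator_mono (ih k) le_rfl
          _ = N (k + j + 1 + 1) := (hNsucc _).symm
          _ = N (k + (j + 1) + 1) := by ring_nf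
  have := key (i - 1) 0
  rw [hN0] at this
  have hi' : 0 + (i - 1) + 1 = i := by omega
  rwa [hi'] at this
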